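/- Let H be a group with trivial center and let G = H × ℤ. Let α be an automorphism of G that is not inner, but such that α^n is inner for some n ≥ 1 (so α represents a nontrivial finite-order element of Out(G)). Let t = (1, 1) denote the generator of the central factor, and let σ : H → H be the automorphism of H induced by α, defined by σ(h) = (first coordinate of α(h, 0)). Then either α(t) = t⁻¹ = (1, −1) (α flips the orientation of the center), or σ is not inner; in the latter case σ^n is inner, so σ represents a nontrivial finite-order element of Out(H). -/

import Mathlib

/-- If `z` is central in `H × Multiplicative ℤ` and `H` is centerless, then the first
coordinate of the image of `z` under any automorphism is trivial. -/
private lemma aux_center_fst {H : Type*} [Group H] (hZ : Subgroup.center H = ⊥)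
    (β : MulAut (H × Multiplicative ℤ)) (z : H × Multiplicative ℤ)
    (hz : ∀ a, z * a = a * z) : (β z).1 = 1 := by
  have hc : ∀ a, (β z) * a = a * (β z) := by
    intro a
    have h := congrArg β (hz (β.symm a))
    simpa using h
  have h1 : (β z).1 ∈ Subgroup.center H := by
    rw [Subgroup.mem_center_iff]
    intro h
    have := congrArg Prod.fst (hc (h, 1))
    simpa using this.symm
  rw [hZ] at h1
  simpa using h1

theorem flip_or_induces_nontrivial_torsion
    {H : Type*} [Group H] (hZ : Subgroup.center H = ⊥)
    (α : MulAut (H × Multiplicative ℤ)) (n : ℕ) (hn : 1 ≤ n)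
    (hnotinner : ¬ ∃ g : H × Multiplicative ℤ, α = MulAut.conj g)
    (hpow : ∃ g : H × Multiplicative ℤ, α ^ n = MulAut.conj g) :
    α (1, Multiplicative.ofAdd 1) = (1, Multiplicative.ofAdd (-1)) ∨
      ((¬ ∃ h₀ : H, ∀ h : H,
          (α (h, Multiplicative.ofAdd 0)).1 = h₀ * h * h₀⁻¹) ∧
        ∃ h₀ : H, ∀ h : H,
          (fun h : H => (α (h, Multiplicative.ofAdd 0)).1)^[n] h
            = h₀ * h * h₀⁻¹) := by
  have hnz : n ≠ 0 := by omega
  simp only [ofAdd_zero]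
  -- elements (1, y) are central
  have hcent : ∀ (y : Multiplicative ℤ) (a : H × Multiplicative ℤ),
      ((1 : H), y) * a = a * ((1 : H), y) := by
    intro y a
    ext
    · simp
    · simp [mul_comm]
  have hfst1 : ∀ (y : Multiplicative ℤ), (α ((1 : H), y)).1 = 1 :=
    fun y => aux_center_fst hZ α _ (hcent y)
  set f : H → H := fun h => (α (h, (1 : Multiplicative ℤ))).1 with hfdef
  set g : H → Multiplicative ℤ := fun h => (α (h, (1 : Multiplicative ℤ))).2 with hgdef
  have hαsplit0 : ∀ x : H, α (x, (1 : Multiplicative ℤ)) = (f x, g x) := fun x => rfl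
  -- first coordinate is independent of the second argument
  have hfst : ∀ (x : H) (y : Multiplicative ℤ), (α (x, y)).1 = f x := by
    intro x y
    have h1 : (x, y) = (x, (1 : Multiplicative ℤ)) * ((1 : H), y) := by simp
    rw [h1, map_mul, Prod.fst_mul, hfst1 y, mul_one]
  have hgmul : ∀ x y : H, g (x * y) = g x * g y := by
    intro x y
    have h1 : ((x * y : H), (1 : Multiplicative ℤ)) =
        (x, (1 : Multiplicative ℤ)) * (y, (1 : Multiplicative ℤ)) := by simp
    simp only [hgdef, h1, map_mul, Prod.snd_mul]
  -- the iterate of f equals αᵏ's first coordinate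
  have hiter : ∀ (k : ℕ) (x : H), f^[k] x = ((α ^ k) (x, (1 : Multiplicative ℤ))).1 := by
    intro k
    induction k with
    | zero => intro x; simp
    | succ k ih =>
      intro x
      rw [Function.iterate_succ_apply', ih, pow_succ', MulAut.mul_apply]
      rw [show ((α ^ k) (x, (1 : Multiplicative ℤ))) =
        (((α ^ k) (x, 1)).1, ((α ^ k) (x, 1)).2) from rfl, hfst]
  -- σ ^ n is inner
  obtain ⟨g₀, hg₀⟩ := hpow
  have hright : ∀ h : H, f^[n] h = g₀.1 * h * g₀.1⁻¹ := by
    intro h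
    rw [hiter n h, hg₀]
    simp [MulAut.conj_apply]
  -- α on the center
  set t : H × Multiplicative ℤ := ((1 : H), Multiplicative.ofAdd 1) with htdef
  set m : Multiplicative ℤ := (α t).2 with hmdef
  have hαt : α t = (1, m) := by
    ext
    · exact hfst1 (Multiplicative.ofAdd 1)
    · rfl
  have htzpow : ∀ k : ℤ, t ^ k = ((1 : H), Multiplicative.ofAdd k) := by
    intro k
    ext
    · simp [htdef]
    · show Multiplicative.toAdd ((t ^ k).2) = k
      rw [show (t ^ k).2 = t.2 ^ k from rfl]
      simp [htdef]
  have hα1 : ∀ k : ℤ, α ((1 : H), Multiplicative.ofAdd k) = ((1 : H), m ^ k) := by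
    intro k
    rw [← htzpow, map_zpow, hαt]
    ext
    · simp
    · show ((((1 : H), m)) ^ k).2 = m ^ k
      rfl
  -- m is ±1
  have hunit : Multiplicative.toAdd m = 1 ∨ Multiplicative.toAdd m = -1 := by
    set k : ℤ := Multiplicative.toAdd ((α.symm t).2) with hkdef
    have hsymmfst : (α.symm t).1 = 1 := aux_center_fst hZ α.symm t (hcent _)
    have h1 : α ((1 : H), Multiplicative.ofAdd k) = t := by
      rw [show ((1 : H), Multiplicative.ofAdd k) = α.symm t by
        ext
        · exact hsymmfst.symm
        · simp [hkdef]]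
      exact α.apply_symm_apply t
    rw [hα1 k] at h1
    have h2 : Multiplicative.toAdd ((m ^ k : Multiplicative ℤ)) = (1 : ℤ) := by
      have := congrArg (fun p => Multiplicative.toAdd p.2) h1
      simpa [htdef] using this
    rw [toAdd_zpow, smul_eq_mul] at h2
    have : IsUnit (Multiplicative.toAdd m) :=
      IsUnit.of_mul_eq_one k (by rw [mul_comm]; exact h2)
    exact Int.isUnit_iff.mp this |>.imp id id
  rcases hunit with hm1 | hm1
  swap
  · -- flip case
    left
    rw [hαt]
    ext
    · rfl
    · show Multiplicative.toAdd m = -1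
      exact hm1
  -- main case : m = ofAdd 1, i.e. α fixes the center pointwise
  right
  have hmone : m = Multiplicative.ofAdd 1 := by
    rw [← ofAdd_toAdd m, hm1]
  have hα1y : ∀ y : Multiplicative ℤ, α ((1 : H), y) = ((1 : H), y) := by
    intro y
    rw [show y = Multiplicative.ofAdd (Multiplicative.toAdd y) by simp, hα1, hmone]
    ext
    · rfl
    · show (Multiplicative.ofAdd (1:ℤ)) ^ (Multiplicative.toAdd y) = y
      exact Multiplicative.toAdd.injective (by rw [toAdd_zpow]; simp)
  have hsplit : ∀ (x : H) (y : Multiplicative ℤ), α (x, y) = (f x, g x * y) := by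
    intro x y
    have h1 : (x, y) = (x, (1 : Multiplicative ℤ)) * ((1 : H), y) := by simp
    rw [h1, map_mul, hαsplit0, hα1y]
    ext <;> simp
  constructor
  · -- σ is not inner
    rintro ⟨h₀, hh₀⟩
    -- g is constant on conjugacy by h₀, hence g ∘ f = g
    have hg1 : g 1 = 1 := by
      have := hgmul 1 1
      simpa using this
    have hginv : ∀ x : H, g x⁻¹ = (g x)⁻¹ := by
      intro x
      have := hgmul x x⁻¹
      rw [mul_inv_cancel, hg1] at this
      exact (inv_eq_of_mul_eq_one_right this.symm).symm
    have hgf : ∀ h : H, g (f h) = g h := by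
      intro h
      have hfa : f h = h₀ * h * h₀⁻¹ := hh₀ h
      rw [hfa, hgmul, hgmul, hginv]
      rw [mul_comm (g h₀) (g h), mul_assoc, mul_inv_cancel, mul_one]
    have hgiter : ∀ (k : ℕ) (h : H), g (f^[k] h) = g h := by
      intro k
      induction k with
      | zero => intro h; simp
      | succ k ih =>
        intro h
        rw [Function.iterate_succ_apply', hgf, ih]
    have hiter2 : ∀ (k : ℕ) (h : H),
        (α ^ k) (h, (1 : Multiplicative ℤ)) = (f^[k] h, (g h) ^ k) := by
      intro k
      induction k with
      | zero => intro h; simp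
      | succ k ih =>
        intro h
        rw [pow_succ', MulAut.mul_apply, ih, hsplit, Function.iterate_succ_apply',
          hgiter, pow_succ']
    -- deduce g h = 1 for all h
    have hgone : ∀ h : H, g h = 1 := by
      intro h
      have h1 := congrArg Prod.snd (hiter2 n h)
      rw [hg₀] at h1
      have h2 : (g h) ^ n = 1 := by
        simpa [MulAut.conj_apply, mul_comm] using h1.symm
      have h3 : (n : ℤ) • Multiplicative.toAdd (g h) = 0 := by
        have := congrArg Multiplicative.toAdd h2
        rw [toAdd_pow] at this
        simpa using this
      have h4 : Multiplicative.toAdd (g h) = 0 := by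
        rcases smul_eq_zero.mp h3 with h | h
        · exact absurd (by exact_mod_cast h) hnz
        · exact h
      rw [← ofAdd_toAdd (g h), h4, ofAdd_zero]
    -- hence α is inner
    apply hnotinner
    refine ⟨(h₀, 1), MulEquiv.ext ?_⟩
    rintro ⟨a, b⟩
    have hfa : f a = h₀ * a * h₀⁻¹ := hh₀ a
    rw [hsplit, hfa, hgone, one_mul, MulAut.conj_apply]
    simp [Prod.ext_iff]
  · exact ⟨g₀.1, hright⟩
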